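/- Let G' be a graph with maximum degree at most d/2^{j-1} (for integers d ≥ 1, j ≥ 1), and suppose each vertex independently selects itself with probability p_j = 1/(d/2^{j-1} + 1). For any vertex v with deg(v) ≥ d/2^j, the probability that some neighbor u of v is the unique selected vertex in the closed neighborhood of {u,v} is at least 1/(4e^2). In particular, v becomes inactive (i.e., v or a neighbor of v is added to the independent set) with probability at least 1/(4e^2). -/

import Mathlib

open MeasureTheory
open scoped ENNReal

lemma all_meas {V : Type*} [Fintype V] (s : Set (V → Bool)) : MeasurableSet s :=
  s.to_countable.measurableSet

lemma pi_cyl {V : Type*} [Fintype V] [DecidableEq V]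
    (ν : Measure Bool) [IsProbabilityMeasure ν]
    (S : Finset V) (b : V → Bool) :
    Measure.pi (fun _ : V => ν) {ω : V → Bool | ∀ w ∈ S, ω w = b w}
      = ∏ w ∈ S, ν {b w} := by
  have hset : {ω : V → Bool | ∀ w ∈ S, ω w = b w}
      = Set.univ.pi (fun w => if w ∈ S then {b w} else Set.univ) := by
    ext ω
    simp only [Set.mem_pi, Set.mem_univ, forall_true_left, Set.mem_setOf_eq]
    constructor
    · intro h w
      by_cases hw : w ∈ S <;> simp [hw, h]
    · intro h w hw
      have := h w
      simpa [hw] using this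
  rw [hset, Measure.pi_pi]
  have : ∀ w : V, ν (if w ∈ S then ({b w} : Set Bool) else Set.univ)
      = if w ∈ S then ν {b w} else 1 := by
    intro w
    by_cases hw : w ∈ S
    · rw [if_pos hw, if_pos hw]
    · rw [if_neg hw, if_neg hw, measure_univ]
  simp_rw [this]
  rw [Finset.prod_ite_mem, Finset.univ_inter]

theorem stmt_0 {V : Type*} [Fintype V] [DecidableEq V]
    (G' : SimpleGraph V) [DecidableRel G'.Adj]
    (d j : ℕ) (hd : 1 ≤ d) (hj : 1 ≤ j)
    (hdeg : ∀ w : V, (G'.degree w : ℝ) ≤ (d : ℝ) / 2 ^ (j - 1))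
    (pj : ℝ≥0∞) (hpj : pj = 1 / ((d : ℝ≥0∞) / 2 ^ (j - 1) + 1)) (hpj1 : pj ≤ 1)
    (μ : Measure (V → Bool))
    (hμ : μ = Measure.pi fun _ : V => (PMF.bernoulli pj.toNNReal (by rw [← ENNReal.coe_le_coe, ENNReal.coe_toNNReal (ne_top_of_le_ne_top ENNReal.one_ne_top hpj1)]; simpa using hpj1)).toMeasure)
    (v : V) (hv : (d : ℝ) / 2 ^ j ≤ (G'.degree v : ℝ)) :
    ENNReal.ofReal (1 / (4 * Real.exp 2)) ≤
        μ {ω : V → Bool | ∃ u : V, G'.Adj v u ∧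
          ∀ w : V, (w = u ∨ w = v ∨ G'.Adj u w ∨ G'.Adj v w) → (ω w = true ↔ w = u)} ∧
      ENNReal.ofReal (1 / (4 * Real.exp 2)) ≤
        μ {ω : V → Bool | ∃ u : V, (u = v ∨ G'.Adj v u) ∧ ω u = true ∧
          ∀ w : V, G'.Adj u w → ω w = false} := by
  -- real parameters
  set D : ℝ := (d : ℝ) / 2 ^ (j - 1) with hD_def
  have hD : 0 < D := by positivity
  set p : ℝ := 1 / (D + 1) with hp_def
  have hp0 : 0 < p := by positivity
  have hp1 : p ≤ 1 := by
    rw [hp_def, div_le_one (by linarith)]; linarith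
  -- pj as ofReal
  have hpj' : pj = ENNReal.ofReal p := by
    rw [hpj, hp_def]
    have h2 : ((d : ℝ≥0∞) / 2 ^ (j - 1)) = ENNReal.ofReal D := by
      rw [hD_def, ENNReal.ofReal_div_of_pos (by positivity)]
      norm_num [ENNReal.ofReal_natCast, ENNReal.ofReal_pow]
    rw [h2]
    rw [show (1 : ℝ≥0∞) = ENNReal.ofReal 1 by simp]
    rw [← ENNReal.ofReal_add hD.le zero_le_one, ENNReal.ofReal_one, one_div, one_div,
      ENNReal.ofReal_inv_of_pos (by linarith)]
  have hqj : (1 : ℝ≥0∞) - pj = ENNReal.ofReal (1 - p) := by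
    rw [hpj', ENNReal.ofReal_sub 1 hp0.le, ENNReal.ofReal_one]
  -- Bernoulli singleton measures
  have hne : pj ≠ ⊤ := ne_top_of_le_ne_top ENNReal.one_ne_top hpj1
  set ν := (PMF.bernoulli pj.toNNReal (by rw [← ENNReal.coe_le_coe, ENNReal.coe_toNNReal (ne_top_of_le_ne_top ENNReal.one_ne_top hpj1)]; simpa using hpj1)).toMeasure with hν
  have hνt : ν {true} = ENNReal.ofReal p := by
    rw [hν, PMF.toMeasure_apply_singleton _ _ (measurableSet_singleton _),
      PMF.bernoulli_apply, Bool.cond_true, ENNReal.coe_toNNReal hne, hpj']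
  have hνf : ν {false} = ENNReal.ofReal (1 - p) := by
    rw [hν, PMF.toMeasure_apply_singleton _ _ (measurableSet_singleton _),
      PMF.bernoulli_apply, Bool.cond_false, ← hqj, ENNReal.coe_sub, ENNReal.coe_one,
      ENNReal.coe_toNNReal hne]
  clear hpj
  -- the per-neighbor events
  set E : V → Set (V → Bool) := fun u => {ω : V → Bool |
    ∀ w : V, (w = u ∨ w = v ∨ G'.Adj u w ∨ G'.Adj v w) → (ω w = true ↔ w = u)} with hE
  set S : V → Finset V := fun u =>
    Finset.univ.filter (fun w => w = u ∨ w = v ∨ G'.Adj u w ∨ G'.Adj v w) with hS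
  have keybool : ∀ (b : Bool) (P : Prop) [Decidable P], (b = decide P) ↔ (b = true ↔ P) := by
    intro b P _; cases b <;> simp
  have hES : ∀ u, E u = {ω : V → Bool | ∀ w ∈ S u, ω w = decide (w = u)} := by
    intro u; ext ω
    simp only [hE, hS, Set.mem_setOf_eq, Finset.mem_filter, Finset.mem_univ, true_and]
    constructor
    · intro h w hw
      exact (keybool _ _).2 (h w hw)
    · intro h w hw
      exact (keybool _ _).1 (h w hw)
  have huS : ∀ u, u ∈ S u := by intro u; simp [hS]
  -- measure of each event
  have hEu : ∀ u, μ (E u)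
      = ENNReal.ofReal p * ENNReal.ofReal (1 - p) ^ ((S u).card - 1) := by
    intro u
    rw [hES, hμ, pi_cyl, ← Finset.mul_prod_erase _ _ (huS u)]
    have h1 : ν {decide (u = u)} = ENNReal.ofReal p := by
      simpa using hνt
    have h2 : ∀ w ∈ (S u).erase u, ν {decide (w = u)} = ENNReal.ofReal (1 - p) := by
      intro w hw
      have hne : w ≠ u := Finset.ne_of_mem_erase hw
      simpa [hne] using hνf
    rw [h1, Finset.prod_congr rfl h2, Finset.prod_const, Finset.card_erase_of_mem (huS u)]
  -- cardinality bound
  have hcard : ∀ u, G'.Adj v u → (((S u).card - 1 : ℕ) : ℝ) ≤ 2 * D := by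
    intro u hu
    have hsub : S u ⊆ insert u (G'.neighborFinset u ∪ G'.neighborFinset v) := by
      intro w hw
      simp only [hS, Finset.mem_filter, Finset.mem_univ, true_and] at hw
      simp only [Finset.mem_insert, Finset.mem_union, SimpleGraph.mem_neighborFinset]
      rcases hw with h | h | h | h
      · exact Or.inl h
      · exact Or.inr (Or.inl (h ▸ hu.symm))
      · exact Or.inr (Or.inl h)
      · exact Or.inr (Or.inr h)
    have h1 : (S u).card ≤ 1 + (G'.degree u + G'.degree v) := by
      calc (S u).card ≤ (insert u (G'.neighborFinset u ∪ G'.neighborFinset v)).card :=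
            Finset.card_le_card hsub
        _ ≤ (G'.neighborFinset u ∪ G'.neighborFinset v).card + 1 :=
            Finset.card_insert_le _ _
        _ ≤ (G'.degree u + G'.degree v) + 1 := by
            have := Finset.card_union_le (G'.neighborFinset u) (G'.neighborFinset v)
            simpa [SimpleGraph.card_neighborFinset_eq_degree] using this
        _ = 1 + (G'.degree u + G'.degree v) := by ring
    have h2 : ((S u).card - 1 : ℕ) ≤ G'.degree u + G'.degree v := by omega
    have h3 : ((G'.degree u : ℝ) + G'.degree v) ≤ 2 * D := by
      have := hdeg u; have := hdeg v; linarith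
    calc (((S u).card - 1 : ℕ) : ℝ) ≤ ((G'.degree u + G'.degree v : ℕ) : ℝ) := by
          exact_mod_cast h2
      _ = (G'.degree u : ℝ) + G'.degree v := by push_cast; ring
      _ ≤ 2 * D := h3
  -- the power bound
  have hqpow : ∀ n : ℕ, (n : ℝ) ≤ 2 * D → (Real.exp 2)⁻¹ ≤ (1 - p) ^ n := by
    intro n hn
    have h1p : (1 : ℝ) - p = (1 + 1/D)⁻¹ := by
      rw [hp_def]; field_simp; ring
    rw [h1p, inv_pow]
    have hpow : (1 + 1/D) ^ n ≤ Real.exp 2 := by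
      calc (1 + 1/D) ^ n ≤ (Real.exp (1/D)) ^ n := by
            apply pow_le_pow_left₀ (by positivity)
            have := Real.add_one_le_exp (1/D); linarith
        _ = Real.exp (n * (1/D)) := (Real.exp_nat_mul _ n).symm
        _ ≤ Real.exp 2 := by
            apply Real.exp_le_exp.2
            rw [mul_one_div, div_le_iff₀ hD]; linarith
    exact inv_anti₀ (pow_pos (by positivity) n) hpow
  -- per-event lower bound
  have hElb : ∀ u, G'.Adj v u →
      ENNReal.ofReal (p * (Real.exp 2)⁻¹) ≤ μ (E u) := by
    intro u hu
    rw [hEu u]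
    rw [← ENNReal.ofReal_pow (by linarith), ← ENNReal.ofReal_mul hp0.le]
    apply ENNReal.ofReal_le_ofReal
    have := hqpow ((S u).card - 1) (hcard u hu)
    nlinarith [hp0]
  -- degree bounds
  have hdegv1 : (1 : ℝ) ≤ G'.degree v := by
    have h0 : (0 : ℝ) < (d : ℝ) / 2 ^ j := by positivity
    have : 0 < G'.degree v := by exact_mod_cast h0.trans_le hv
    exact_mod_cast this
  have hdv : D / 2 ≤ (G'.degree v : ℝ) := by
    have h2 : (2 : ℝ) ^ j = 2 ^ (j - 1) * 2 := by
      rw [← pow_succ]; congr 1; omega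
    have heq : D / 2 = (d : ℝ) / 2 ^ j := by rw [hD_def, div_div, ← h2]
    rw [heq]; exact hv
  have hdp : 1 / 4 ≤ (G'.degree v : ℝ) * p := by
    rw [hp_def, mul_one_div, le_div_iff₀ (by linarith : (0:ℝ) < D + 1)]
    linarith
  -- main event as disjoint union
  have hdisj : (↑(G'.neighborFinset v) : Set V).PairwiseDisjoint E := by
    intro u₁ h₁ u₂ h₂ hne
    simp only [Finset.coe_sort_coe, Finset.mem_coe, SimpleGraph.mem_neighborFinset] at h₁ h₂
    refine Set.disjoint_left.2 fun ω hω₁ hω₂ => ?_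
    have e1 : ω u₁ = true := (hω₁ u₁ (Or.inl rfl)).2 rfl
    have e2 : ω u₁ = true ↔ u₁ = u₂ := hω₂ u₁ (Or.inr (Or.inr (Or.inr h₁)))
    exact hne (e2.1 e1)
  have hA : {ω : V → Bool | ∃ u : V, G'.Adj v u ∧
      ∀ w : V, (w = u ∨ w = v ∨ G'.Adj u w ∨ G'.Adj v w) → (ω w = true ↔ w = u)}
      = ⋃ u ∈ G'.neighborFinset v, E u := by
    ext ω
    simp only [Set.mem_setOf_eq, Set.mem_iUnion, SimpleGraph.mem_neighborFinset, hE,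
      exists_prop]
  have hmain : ENNReal.ofReal (1 / (4 * Real.exp 2)) ≤
      μ {ω : V → Bool | ∃ u : V, G'.Adj v u ∧
        ∀ w : V, (w = u ∨ w = v ∨ G'.Adj u w ∨ G'.Adj v w) → (ω w = true ↔ w = u)} := by
    rw [hA, measure_biUnion_finset hdisj (fun _ _ => all_meas _)]
    calc ENNReal.ofReal (1 / (4 * Real.exp 2))
        ≤ (G'.degree v) • ENNReal.ofReal (p * (Real.exp 2)⁻¹) := by
          rw [nsmul_eq_mul, ← ENNReal.ofReal_natCast, ← ENNReal.ofReal_mul (by positivity)]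
          apply ENNReal.ofReal_le_ofReal
          have he : (0:ℝ) < Real.exp 2 := Real.exp_pos 2
          rw [one_div, mul_inv, ← mul_assoc]
          have : (4 : ℝ)⁻¹ ≤ (G'.degree v : ℝ) * p := by
            rw [show (4:ℝ)⁻¹ = 1/4 by norm_num]; exact hdp
          exact mul_le_mul_of_nonneg_right this (by positivity)
      _ ≤ ∑ u ∈ G'.neighborFinset v, μ (E u) := by
          rw [← SimpleGraph.card_neighborFinset_eq_degree]
          apply Finset.card_nsmul_le_sum
          intro u hu
          exact hElb u (by rwa [SimpleGraph.mem_neighborFinset] at hu)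
  refine ⟨hmain, le_trans hmain (measure_mono ?_)⟩
  intro ω hω
  obtain ⟨u, hu, h⟩ := hω
  refine ⟨u, Or.inr hu, (h u (Or.inl rfl)).2 rfl, fun w hw => ?_⟩
  have := h w (Or.inr (Or.inr (Or.inl hw)))
  have hne : w ≠ u := hw.ne'
  simpa [hne] using this
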